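/- Let F be a left-continuous Wardowski function, a > 0, and suppose F is regular: there exists k ∈ (0,1) with t^k F(t) → 0 as t → 0+. Then φ(t) = sup { s ≥ 0 : a + F(s) ≤ F(t) } is increasing, regressive, and Matkowski tele-admissible: Σ_{n≥0} φⁿ(t) < ∞ for every t ≥ 0. -/

import Mathlib

open Filter

set_option maxHeartbeats 1000000 in
/-- For a left-continuous regular Wardowski function `F` and `a > 0`,
the function `φ t = sup {s ≥ 0 : a + F s ≤ F t}` is increasing on `[0,∞)`,
regressive, and Matkowski tele-admissible: `Σ_{n} φⁿ t < ∞` for every `t ≥ 0`. -/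
theorem wardowski_leftCont_regular_phi_tele
    (F : ℝ → EReal)
    (hfin : ∀ t, 0 ≤ t → F t < ⊤)
    (hbot : ∀ t, 0 ≤ t → (F t = ⊥ ↔ t = 0))
    (hmono : ∀ s t, 0 ≤ s → s < t → F s < F t)
    (hlim : Tendsto F (nhdsWithin 0 (Set.Ioi 0)) (nhds ⊥))
    (hlc : ∀ t : ℝ, 0 < t → Tendsto F (nhdsWithin t (Set.Iio t)) (nhds (F t)))
    (hreg : ∃ k ∈ Set.Ioo (0:ℝ) 1,
      Tendsto (fun t : ℝ => ((t ^ k : ℝ) : EReal) * F t)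
        (nhdsWithin 0 (Set.Ioi 0)) (nhds 0))
    (a : ℝ) (ha : 0 < a)
    (φ : ℝ → ℝ) (hφ : ∀ t, φ t = sSup {s : ℝ | 0 ≤ s ∧ (a : EReal) + F s ≤ F t}) :
    (∀ t₁ t₂, 0 ≤ t₁ → t₁ ≤ t₂ → φ t₁ ≤ φ t₂) ∧
    φ 0 = 0 ∧ (∀ t, 0 < t → φ t < t) ∧
    (∀ t, 0 ≤ t → Summable (fun n => φ^[n] t)) := by
  obtain ⟨k, hk, hregk⟩ := hreg
  have hF0 : F 0 = ⊥ := (hbot 0 le_rfl).mpr rfl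
  have hmono' : ∀ s t : ℝ, 0 ≤ s → s ≤ t → F s ≤ F t := by
    intro s t hs hst
    rcases eq_or_lt_of_le hst with h | h
    · rw [h]
    · exact (hmono s t hs h).le
  have hreal : ∀ s : ℝ, 0 < s → (((F s).toReal : ℝ) : EReal) = F s := by
    intro s hs
    exact EReal.coe_toReal (hfin s hs.le).ne
      (fun h => hs.ne' ((hbot s hs.le).mp h))
  set S : ℝ → Set ℝ := fun t => {s : ℝ | 0 ≤ s ∧ (a : EReal) + F s ≤ F t} with hSdef
  have hmem0 : ∀ t : ℝ, 0 ∈ S t := by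
    intro t
    refine ⟨le_rfl, ?_⟩
    rw [hF0, EReal.add_bot]
    exact bot_le
  have hlt : ∀ t : ℝ, 0 < t → ∀ s ∈ S t, s < t := by
    intro t ht s hs
    by_contra h
    push_neg at h
    have h1 : F t ≤ F s := hmono' t s ht.le h
    have h2 : (a : EReal) + F s ≤ F s := hs.2.trans h1
    have hs0 : 0 < s := lt_of_lt_of_le ht h
    rw [← hreal s hs0] at h2
    rw [(EReal.coe_add a (F s).toReal).symm] at h2
    have : a + (F s).toReal ≤ (F s).toReal := by exact_mod_cast h2
    linarith
  have hS0 : S 0 = {0} := by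
    ext s
    simp only [Set.mem_singleton_iff, hSdef, Set.mem_setOf_eq]
    constructor
    · rintro ⟨hs0, hs⟩
      rw [hF0, le_bot_iff] at hs
      by_contra hne
      have hspos : 0 < s := lt_of_le_of_ne hs0 (Ne.symm hne)
      rw [← hreal s hspos] at hs
      exact absurd hs (by
        rw [(EReal.coe_add a (F s).toReal).symm]
        exact EReal.coe_ne_bot _)
    · rintro rfl
      exact hmem0 0
  have hbdd : ∀ t : ℝ, 0 ≤ t → BddAbove (S t) := by
    intro t ht
    rcases eq_or_lt_of_le ht with h | h
    · rw [← h, hS0]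
      exact bddAbove_singleton
    · exact ⟨t, fun s hs => (hlt t h s hs).le⟩
  have hφ0 : φ 0 = 0 := by
    rw [hφ, show {s : ℝ | 0 ≤ s ∧ (a : EReal) + F s ≤ F 0} = S 0 from rfl, hS0, csSup_singleton]
  have hφnonneg : ∀ t : ℝ, 0 ≤ t → 0 ≤ φ t := by
    intro t ht
    rw [hφ]
    exact le_csSup (hbdd t ht) (hmem0 t)
  have hφle : ∀ t : ℝ, 0 < t → φ t ≤ t := by
    intro t ht
    rw [hφ]
    exact csSup_le ⟨0, hmem0 t⟩ (fun s hs => (hlt t ht s hs).le)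
  -- key inequality
  have hkey : ∀ t : ℝ, 0 ≤ t → (a : EReal) + F (φ t) ≤ F t := by
    intro t ht
    rcases eq_or_lt_of_le ht with h | h
    · rw [← h, hφ0, hF0, EReal.add_bot]
    rcases eq_or_lt_of_le (hφnonneg t ht) with h0 | h0
    · rw [← h0, hF0, EReal.add_bot]
      exact bot_le
    by_cases hmem : φ t ∈ S t
    · exact hmem.2
    have hne : (S t).Nonempty := ⟨0, hmem0 t⟩
    have hb := hbdd t ht
    have hcl : φ t ∈ closure (S t) := by
      rw [hφ]
      exact csSup_mem_closure hne hb
    have hsub : S t ⊆ Set.Iio (φ t) := by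
      intro s hs
      have hle : s ≤ φ t := by rw [hφ]; exact le_csSup hb hs
      exact lt_of_le_of_ne hle (fun h => hmem (h ▸ hs))
    have hnb : (nhdsWithin (φ t) (S t)).NeBot := mem_closure_iff_nhdsWithin_neBot.mp hcl
    have h1 : Tendsto F (nhdsWithin (φ t) (S t)) (nhds (F (φ t))) :=
      (hlc (φ t) h0).mono_left (nhdsWithin_mono _ hsub)
    -- bound: on S t, F s ≤ (F t).toReal - a
    set c : ℝ := (F t).toReal - a with hc
    have hbound : ∀ s ∈ S t, F s ≤ ((c : ℝ) : EReal) := by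
      intro s hs
      rcases eq_or_ne (F s) ⊥ with hb' | hb'
      · rw [hb']; exact bot_le
      have hspos : 0 < s := lt_of_le_of_ne hs.1
        (fun h => hb' ((hbot s hs.1).mpr h.symm))
      have h2 := hs.2
      rw [← hreal s hspos, ← hreal t h,
        (EReal.coe_add a (F s).toReal).symm] at h2
      have : a + (F s).toReal ≤ (F t).toReal := by exact_mod_cast h2
      rw [← hreal s hspos]
      exact_mod_cast by linarith
    have hFle : F (φ t) ≤ ((c : ℝ) : EReal) :=
      le_of_tendsto h1 (eventually_nhdsWithin_of_forall hbound)
    calc (a : EReal) + F (φ t) ≤ (a : EReal) + ((c : ℝ) : EReal) := add_le_add_right hFle _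
      _ = ((a + c : ℝ) : EReal) := (EReal.coe_add a c).symm
      _ = F t := by rw [hc]; rw [show a + ((F t).toReal - a) = (F t).toReal by ring]; exact hreal t h
  have hφlt : ∀ t : ℝ, 0 < t → φ t < t := by
    intro t ht
    rcases lt_or_eq_of_le (hφle t ht) with h | h
    · exact h
    exfalso
    have := hkey t ht.le
    rw [h] at this
    rw [← hreal t ht,
      (EReal.coe_add a (F t).toReal).symm] at this
    have : a + (F t).toReal ≤ (F t).toReal := by exact_mod_cast this
    linarith
  have hφmono : ∀ t₁ t₂ : ℝ, 0 ≤ t₁ → t₁ ≤ t₂ → φ t₁ ≤ φ t₂ := by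
    intro t₁ t₂ h1 h12
    rw [hφ, hφ]
    exact csSup_le_csSup (hbdd t₂ (h1.trans h12)) ⟨0, hmem0 t₁⟩
      (fun s hs => ⟨hs.1, hs.2.trans (hmono' t₁ t₂ h1 h12)⟩)
  refine ⟨hφmono, hφ0, hφlt, ?_⟩
  -- summability
  intro t ht
  have hiter_nonneg : ∀ n : ℕ, 0 ≤ φ^[n] t := by
    intro n
    induction n with
    | zero => simpa using ht
    | succ n ih =>
      rw [Function.iterate_succ_apply']
      exact hφnonneg _ ih
  by_cases hzero : ∃ N : ℕ, φ^[N] t = 0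
  · obtain ⟨N, hN⟩ := hzero
    apply summable_of_ne_finset_zero (s := Finset.range N)
    intro n hn
    simp only [Finset.mem_range, not_lt] at hn
    have : ∀ m : ℕ, φ^[N + m] t = 0 := by
      intro m
      induction m with
      | zero => simpa using hN
      | succ m ih =>
        rw [← Nat.add_assoc, Function.iterate_succ_apply', ih, hφ0]
    have := this (n - N)
    rwa [Nat.add_sub_cancel' hn] at this
  push_neg at hzero
  have hpos : ∀ n : ℕ, 0 < φ^[n] t := fun n =>
    lt_of_le_of_ne (hiter_nonneg n) (Ne.symm (hzero n))
  have htpos : 0 < t := hpos 0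
  set u : ℕ → ℝ := fun n => φ^[n] t with hu
  -- iterated key inequality
  have hiter : ∀ n : ℕ, ((n * a : ℝ) : EReal) + F (u n) ≤ F t := by
    intro n
    induction n with
    | zero => simp [hu]
    | succ n ih =>
      have h1 : (a : EReal) + F (u (n + 1)) ≤ F (u n) := by
        have : u (n + 1) = φ (u n) := Function.iterate_succ_apply' φ n t
        rw [this]
        exact hkey (u n) (hiter_nonneg n)
      calc (((n + 1 : ℕ) * a : ℝ) : EReal) + F (u (n+1))
          = ((n * a : ℝ) : EReal) + ((a : EReal) + F (u (n+1))) := by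
            rw [← add_assoc, ← EReal.coe_add]
            congr 1
            exact congrArg Real.toEReal (by push_cast; ring)
        _ ≤ ((n * a : ℝ) : EReal) + F (u n) := add_le_add_right h1 _
        _ ≤ F t := ih
  set g : ℕ → ℝ := fun n => (F (u n)).toReal with hg
  have hgr : ∀ n, ((g n : ℝ) : EReal) = F (u n) := fun n => hreal _ (hpos n)
  set G : ℝ := (F t).toReal with hG
  have hGr : ((G : ℝ) : EReal) = F t := hreal t htpos
  have hiterR : ∀ n : ℕ, n * a + g n ≤ G := by
    intro n
    have := hiter n
    rw [← hgr n, ← hGr, ← EReal.coe_add] at this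
    exact_mod_cast this
  -- u is antitone and tends to 0
  have hdec : ∀ n : ℕ, u (n + 1) < u n := by
    intro n
    have : u (n + 1) = φ (u n) := Function.iterate_succ_apply' φ n t
    rw [this]
    exact hφlt (u n) (hpos n)
  have hu0 : Tendsto u atTop (nhds 0) := by
    rw [Metric.tendsto_atTop]
    intro ε hε
    by_contra hcon
    push_neg at hcon
    -- then for every N there is n ≥ N with u n ≥ ε; by antitonicity u N ≥ ε for all N
    have hanti : Antitone u := antitone_nat_of_succ_le (fun n => (hdec n).le)
    have hall : ∀ n, ε ≤ u n := by
      intro n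
      obtain ⟨m, hm, hm2⟩ := hcon n
      rw [Real.dist_eq, sub_zero, abs_of_nonneg (hiter_nonneg m)] at hm2
      exact le_trans hm2 (hanti hm)
    -- F (u n) ≥ F ε, but g n → -∞
    have hFε : ∀ n, F ε ≤ F (u n) := fun n => hmono' ε (u n) hε.le (hall n)
    have hεreal := hreal ε hε
    have : ∀ n : ℕ, (F ε).toReal ≤ g n := by
      intro n
      have := hFε n
      rw [← hεreal, ← hgr n] at this
      exact_mod_cast this
    obtain ⟨n, hn⟩ := exists_nat_gt ((G - (F ε).toReal) / a)
    have h1 := hiterR n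
    have h2 := this n
    have hlast : (G - (F ε).toReal) / a < n := hn
    rw [div_lt_iff₀ ha] at hlast
    linarith
  have hu0' : Tendsto u atTop (nhdsWithin 0 (Set.Ioi 0)) :=
    tendsto_nhdsWithin_of_tendsto_nhds_of_eventually_within u hu0
      (Eventually.of_forall hpos)
  -- regularity along u
  have hcomp : Tendsto (fun n => ((u n ^ k : ℝ) : EReal) * F (u n)) atTop (nhds 0) :=
    hregk.comp hu0'
  have hcompR : Tendsto (fun n => u n ^ k * g n) atTop (nhds 0) := by
    have : ∀ n, ((u n ^ k * g n : ℝ) : EReal) = ((u n ^ k : ℝ) : EReal) * F (u n) := by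
      intro n
      rw [EReal.coe_mul, hgr n]
    apply EReal.tendsto_coe.mp
    exact Tendsto.congr (fun n => (this n).symm) hcomp
  have hpk : Tendsto (fun n => u n ^ k) atTop (nhds 0) := by
    have hc : Tendsto (fun x : ℝ => x ^ k) (nhds 0) (nhds 0) := by
      have := (Real.continuousAt_rpow_const 0 k (Or.inr hk.1.le)).tendsto
      simpa [Real.zero_rpow hk.1.ne'] using this
    exact hc.comp hu0
  have hprod : Tendsto (fun n => u n ^ k * (G - g n)) atTop (nhds 0) := by
    have h1 : Tendsto (fun n => u n ^ k * G) atTop (nhds 0) := by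
      simpa using hpk.mul_const G
    have := h1.sub hcompR
    simpa [mul_sub] using this
  -- eventually n * u n ^ k ≤ 1
  have hev : ∀ᶠ n : ℕ in atTop, (n : ℝ) * u n ^ k ≤ 1/a := by
    have hb : ∀ n : ℕ, (n : ℝ) * a * u n ^ k ≤ u n ^ k * (G - g n) := by
      intro n
      have h1 := hiterR n
      have h2 : (0:ℝ) ≤ u n ^ k := Real.rpow_nonneg (hiter_nonneg n) k
      nlinarith
    filter_upwards [hprod.eventually_le_const (show (0:ℝ) < 1 by norm_num)] with n hn
    have h := le_trans (hb n) hn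
    rw [le_div_iff₀ ha]
    calc (n:ℝ) * u n ^ k * a = (n:ℝ) * a * u n ^ k := by ring
      _ ≤ 1 := h
  obtain ⟨N, hN⟩ := hev.exists_forall_of_atTop
  have hN1 : 1 ≤ N + 1 := Nat.le_add_left 1 N
  -- for n ≥ max N 1, u n ≤ n ^ (-(k⁻¹)) * (1/a)^(k⁻¹)
  have hbound : ∀ n : ℕ, N ≤ n → 1 ≤ n → u n ≤ ((1/a) ^ (k⁻¹ : ℝ)) * (n : ℝ) ^ (-(k⁻¹ : ℝ)) := by
    intro n hn hn1
    have h1 : (n:ℝ) * u n ^ k ≤ 1/a := hN n hn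
    have hnpos : (0:ℝ) < n := by exact_mod_cast hn1
    have h2 : u n ^ k ≤ (1/a) * (n:ℝ)⁻¹ := by
      rw [mul_comm] at h1
      rw [← le_div_iff₀ hnpos] at h1
      rw [div_eq_mul_inv] at h1
      linarith
    have h3 : (u n ^ k) ^ (k⁻¹ : ℝ) ≤ ((1/a) * (n:ℝ)⁻¹) ^ (k⁻¹ : ℝ) :=
      Real.rpow_le_rpow (Real.rpow_nonneg (hiter_nonneg n) k) h2 (inv_nonneg.mpr hk.1.le)
    rw [← Real.rpow_mul (hiter_nonneg n), mul_inv_cancel₀ hk.1.ne', Real.rpow_one] at h3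
    rw [Real.mul_rpow (one_div_nonneg.mpr ha.le) (inv_nonneg.mpr (Nat.cast_nonneg n))] at h3
    rw [Real.inv_rpow (Nat.cast_nonneg n), ← Real.rpow_neg (Nat.cast_nonneg n)] at h3
    exact h3
  -- summable by comparison
  have hsum : Summable (fun n : ℕ => ((1/a) ^ (k⁻¹ : ℝ)) * (n : ℝ) ^ (-(k⁻¹ : ℝ))) := by
    apply Summable.mul_left
    apply Real.summable_nat_rpow.mpr
    have : 1 < k⁻¹ := by
      rw [lt_inv_comm₀ one_pos hk.1]
      simpa using hk.2
    linarith
  set M := max N 1 with hM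
  rw [← summable_nat_add_iff M]
  refine Summable.of_nonneg_of_le (fun n => hiter_nonneg (n + M))
    (f := fun n => ((1/a) ^ (k⁻¹ : ℝ)) * ((n + M : ℕ) : ℝ) ^ (-(k⁻¹ : ℝ)))
    (fun n => ?_) ((summable_nat_add_iff M).mpr hsum)
  exact hbound (n + M) (le_trans (le_max_left N 1) (Nat.le_add_left M n))
    (le_trans (le_max_right N 1) (Nat.le_add_left M n))
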